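/- Define ψ₂(x) := 4·∫₀ˣ e^{t₂²} ∫₀^{t₂} e^{-u₂²} ∫₀^{u₂} e^{t₁²} ∫₀^{t₁} e^{-u₁²} du₁ dt₁ du₂ dt₂. Then ψ₂ is an even function and ψ₂(x) = Σ_{n=0}^∞ (2ⁿ · x^{2n+4} / ((2n+3)!! · (n+2))) · Σ_{k=0}^n 1/(k+1) for all real x. -/

import Mathlib

open Real intervalIntegral

open Finset MeasureTheory

noncomputable def psi2 (x : ℝ) : ℝ :=
  4 * ∫ t₂ in (0 : ℝ)..x, Real.exp (t₂ ^ 2) *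
        ∫ u₂ in (0 : ℝ)..t₂, Real.exp (-u₂ ^ 2) *
          ∫ t₁ in (0 : ℝ)..u₂, Real.exp (t₁ ^ 2) *
            ∫ u₁ in (0 : ℝ)..t₁, Real.exp (-u₁ ^ 2)

lemma hasSum_exp_sq (s t : ℝ) :
    HasSum (fun m : ℕ => s ^ m / m.factorial * t ^ (2 * m)) (Real.exp (s * t ^ 2)) := by
  have h := NormedSpace.expSeries_div_hasSum_exp (s * t ^ 2)
  rw [← Real.exp_eq_exp_ℝ] at h
  refine h.congr_fun fun m => ?_
  rw [mul_pow, pow_mul]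
  ring

lemma summable_aux (K R : ℝ) (r : ℕ) :
    Summable (fun n : ℕ => K ^ n / n.factorial * R ^ (2 * n + r)) := by
  have h := (Real.summable_pow_div_factorial (K * R ^ 2)).mul_right (R ^ r)
  refine h.congr fun n => ?_
  rw [mul_pow, ← pow_mul, pow_add]
  ring

lemma sum_inv_fact (n : ℕ) :
    ∑ m ∈ range (n + 1), ((m.factorial : ℝ) * (n - m).factorial)⁻¹
      = 2 ^ n / n.factorial := by
  have h : ∀ m ∈ range (n + 1), ((m.factorial : ℝ) * (n - m).factorial)⁻¹
      = (n.choose m : ℝ) / n.factorial := by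
    intro m hm
    have hmn : m ≤ n := Nat.lt_succ_iff.mp (mem_range.mp hm)
    have := Nat.choose_mul_factorial_mul_factorial hmn
    field_simp
    push_cast [← this]
    ring
  rw [sum_congr rfl h, ← sum_div]
  norm_cast
  rw [Nat.sum_range_choose]

lemma conv_bound (u : ℕ → ℝ) (K : ℝ) (hK : 1 ≤ K)
    (hu : ∀ k, |u k| ≤ K ^ k / k.factorial) (s : ℝ) (hs : |s| = 1) (n : ℕ) :
    |∑ m ∈ range (n + 1), s ^ m / m.factorial * u (n - m)| ≤ (2 * K) ^ n / n.factorial := by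
  have hK0 : (0:ℝ) ≤ K := le_trans zero_le_one hK
  calc |∑ m ∈ range (n + 1), s ^ m / m.factorial * u (n - m)|
      ≤ ∑ m ∈ range (n + 1), |s ^ m / m.factorial * u (n - m)| := abs_sum_le_sum_abs _ _
    _ ≤ ∑ m ∈ range (n + 1), K ^ n * ((m.factorial : ℝ) * (n - m).factorial)⁻¹ := by
        refine sum_le_sum fun m hm => ?_
        rw [abs_mul, abs_div, abs_pow, hs, one_pow, Nat.abs_cast]
        have h1 : |u (n - m)| ≤ K ^ (n - m) / (n - m).factorial := hu _
        have h2 : K ^ (n - m) ≤ K ^ n := pow_le_pow_right₀ hK (Nat.sub_le n m)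
        have hf1 : (0:ℝ) < m.factorial := by positivity
        have hf2 : (0:ℝ) < ((n - m).factorial : ℝ) := by positivity
        calc 1 / (m.factorial : ℝ) * |u (n - m)|
            ≤ 1 / (m.factorial : ℝ) * (K ^ n / (n - m).factorial) := by
              refine mul_le_mul_of_nonneg_left (h1.trans ?_) (by positivity)
              exact div_le_div_of_nonneg_right h2 hf2.le
          _ = K ^ n * ((m.factorial : ℝ) * (n - m).factorial)⁻¹ := by
              rw [mul_inv]; ring
    _ = (2 * K) ^ n / n.factorial := by
        rw [← mul_sum, sum_inv_fact, mul_pow]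
        ring

lemma alt_sum (n : ℕ) (hn : n ≠ 0) :
    ∑ m ∈ range (n + 1), (-1 : ℝ) ^ (n - m) / ((n - m).factorial * m.factorial) = 0 := by
  have h : ∀ m ∈ range (n + 1), (-1 : ℝ) ^ (n - m) / ((n - m).factorial * m.factorial)
      = ((-1) ^ (n - m) * (n.choose m : ℝ)) / n.factorial := by
    intro m hm
    have hmn : m ≤ n := Nat.lt_succ_iff.mp (mem_range.mp hm)
    have := Nat.choose_mul_factorial_mul_factorial hmn
    rw [div_eq_div_iff (by positivity) (by positivity)]
    push_cast [← this]
    ring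
  rw [sum_congr rfl h, ← sum_div, div_eq_zero_iff]
  left
  have hr := Finset.sum_range_reflect (fun m => (-1 : ℝ) ^ (n - m) * (n.choose m : ℝ)) (n + 1)
  simp only [Nat.add_sub_cancel] at hr
  rw [← hr]
  have : ∀ j ∈ range (n + 1),
      (-1 : ℝ) ^ (n - (n - j)) * (n.choose (n - j) : ℝ) = (-1) ^ j * (n.choose j : ℝ) := by
    intro j hj
    have hjn : j ≤ n := Nat.lt_succ_iff.mp (mem_range.mp hj)
    rw [Nat.sub_sub_self hjn, Nat.choose_symm hjn]
  rw [sum_congr rfl this]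
  have := @Int.alternating_sum_range_choose n
  rw [if_neg hn] at this
  have : ((∑ i ∈ range (n + 1), (-1 : ℤ) ^ i * (n.choose i : ℤ) : ℤ) : ℝ) = 0 := by
    rw [this]; norm_num
  push_cast at this
  convert this using 2

lemma hasSum_primitive (c : ℕ → ℝ) (k : ℕ → ℕ) (F : ℝ → ℝ)
    (hsum : ∀ t, HasSum (fun n => c n * t ^ k n) (F t))
    (hb : ∀ R : ℝ, 0 ≤ R → Summable (fun n => |c n| * R ^ k n)) (x : ℝ) :
    HasSum (fun n => c n * x ^ (k n + 1) / ((k n : ℝ) + 1)) (∫ t in (0:ℝ)..x, F t) := by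
  have hbd : ∀ (n : ℕ) (t : ℝ), t ∈ Set.uIoc (0:ℝ) x → ‖c n * t ^ k n‖ ≤ |c n| * |x| ^ k n := by
    intro n t ht
    have h1 : |t| ≤ |x| := by
      have h2 := Set.uIoc_subset_uIcc ht
      rw [Set.uIcc_eq_union] at h2
      rcases h2 with h | h <;> rw [Set.mem_Icc] at h <;> rw [abs_le] <;>
        constructor <;> nlinarith [neg_abs_le x, le_abs_self x]
    rw [norm_mul, norm_pow, Real.norm_eq_abs, Real.norm_eq_abs]
    exact mul_le_mul_of_nonneg_left (pow_le_pow_left₀ (abs_nonneg t) h1 _) (abs_nonneg _)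
  have H : HasSum (fun n => ∫ t in (0:ℝ)..x, c n * t ^ k n) (∫ t in (0:ℝ)..x, F t) := by
    apply intervalIntegral.hasSum_integral_of_dominated_convergence
        (bound := fun n (_ : ℝ) => |c n| * |x| ^ k n)
    · exact fun n => ((continuous_const.mul (continuous_pow (k n))).aestronglyMeasurable)
    · exact fun n => ae_of_all _ (hbd n)
    · exact ae_of_all _ fun t _ => hb |x| (abs_nonneg x)
    · exact intervalIntegrable_const
    · exact ae_of_all _ fun t _ => hsum t
  convert H using 2 with n
  rw [intervalIntegral.integral_const_mul, integral_pow]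
  rw [zero_pow (Nat.succ_ne_zero _)]
  ring

lemma hasSum_exp_mul (s : ℝ) (hs : |s| = 1) (u : ℕ → ℝ) (r : ℕ) (t : ℝ) (G : ℝ)
    (hG : HasSum (fun n => u n * t ^ (2 * n + r)) G)
    (hGn : Summable (fun n => |u n| * |t| ^ (2 * n + r))) :
    HasSum (fun n => (∑ m ∈ range (n + 1), s ^ m / m.factorial * u (n - m)) * t ^ (2 * n + r))
      (Real.exp (s * t ^ 2) * G) := by
  set f : ℕ → ℝ := fun m => s ^ m / m.factorial * t ^ (2 * m) with hf_def
  set g : ℕ → ℝ := fun n => u n * t ^ (2 * n + r) with hg_def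
  have hf : HasSum f (Real.exp (s * t ^ 2)) := hasSum_exp_sq s t
  have hf_norm : Summable fun m => ‖f m‖ := by
    refine (summable_aux 1 |t| 0).congr fun m => ?_
    simp [hf_def, abs_mul, abs_div, abs_pow, hs, abs_abs]
  have hg_norm : Summable fun n => ‖g n‖ := by
    refine hGn.congr fun n => ?_
    simp [hg_def, abs_mul, abs_pow]
  have hsum : Summable fun n => ∑ m ∈ range (n + 1), f m * g (n - m) :=
    (summable_norm_sum_mul_range_of_summable_norm hf_norm hg_norm).of_norm
  have htsum := tsum_mul_tsum_eq_tsum_sum_range_of_summable_norm hf_norm hg_norm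
  rw [hf.tsum_eq, hG.tsum_eq] at htsum
  have H : HasSum (fun n => ∑ m ∈ range (n + 1), f m * g (n - m)) (Real.exp (s * t ^ 2) * G) := by
    rw [htsum]; exact hsum.hasSum
  refine H.congr_fun fun n => ?_
  rw [sum_mul]
  refine sum_congr rfl fun m hm => ?_
  have hmn : m ≤ n := Nat.lt_succ_iff.mp (mem_range.mp hm)
  simp only [hf_def, hg_def]
  rw [mul_mul_mul_comm, ← pow_add]
  congr 2
  omega

noncomputable def Ac (n : ℕ) : ℝ := (-1) ^ n / (n.factorial * (2 * n + 1))

noncomputable def Cc (n : ℕ) : ℝ := 4 ^ n * n.factorial / (2 * n + 1).factorial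

noncomputable def Bc (n : ℕ) : ℝ := Cc n / (2 * n + 2)

noncomputable def Dc (n : ℕ) : ℝ :=
  ∑ m ∈ range (n + 1), (-1 : ℝ) ^ m / m.factorial * Bc (n - m)

noncomputable def Ec (n : ℕ) : ℝ := Dc n / (2 * n + 3)

noncomputable def Qc (n : ℕ) : ℝ :=
  ∑ m ∈ range (n + 1), (1 : ℝ) ^ m / m.factorial * Ec (n - m)

lemma idA (n : ℕ) : ∑ m ∈ range (n + 1), (1 : ℝ) ^ m / m.factorial * Ac (n - m) = Cc n := by
  induction n with
  | zero => simp [Ac, Cc]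
  | succ n ih =>
    have key : ((2 : ℝ) * (n + 1) + 1) *
        ∑ m ∈ range (n + 2), (1 : ℝ) ^ m / m.factorial * Ac (n + 1 - m)
        = 2 * Cc n := by
      rw [mul_sum]
      have hsplit : ∀ m ∈ range (n + 2),
          ((2 : ℝ) * (n + 1) + 1) * ((1 : ℝ) ^ m / m.factorial * Ac (n + 1 - m))
          = (-1 : ℝ) ^ (n + 1 - m) / ((n + 1 - m).factorial * m.factorial)
            + 2 * (m * ((1 : ℝ) ^ m / m.factorial * Ac (n + 1 - m))) := by
        intro m hm
        have hmn : m ≤ n + 1 := Nat.lt_succ_iff.mp (mem_range.mp hm)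
        have hcast : ((n + 1 - m : ℕ) : ℝ) = (n : ℝ) + 1 - m := by
          push_cast [Nat.cast_sub hmn]; ring
        have h1 : ((2 : ℝ) * (n + 1) + 1) = (2 * ((n + 1 - m : ℕ) : ℝ) + 1) + 2 * m := by
          rw [hcast]; ring
        rw [h1]
        simp only [Ac, one_pow]
        have hf : ((n + 1 - m).factorial : ℝ) ≠ 0 := Nat.cast_ne_zero.2 (Nat.factorial_ne_zero _)
        have hf2 : (m.factorial : ℝ) ≠ 0 := Nat.cast_ne_zero.2 (Nat.factorial_ne_zero _)
        have ha0 : (0:ℝ) ≤ ((n + 1 - m : ℕ) : ℝ) := Nat.cast_nonneg _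
        generalize ((n + 1 - m : ℕ) : ℝ) = a at ha0 ⊢
        generalize ((n + 1 - m).factorial : ℝ) = F at hf ⊢
        generalize (m.factorial : ℝ) = M at hf2 ⊢
        generalize ((-1 : ℝ) ^ (n + 1 - m)) = e
        have hpos : (2 : ℝ) * a + 1 ≠ 0 := by positivity
        field_simp
      rw [sum_congr rfl hsplit, sum_add_distrib]
      rw [alt_sum (n + 1) (Nat.succ_ne_zero n)]
      rw [zero_add, ← mul_sum]
      congr 1
      rw [Finset.sum_range_succ']
      simp only [Nat.cast_zero, zero_mul, add_zero]
      rw [← ih]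
      refine sum_congr rfl fun m hm => ?_
      have hfs : ((m + 1).factorial : ℝ) = (m + 1) * m.factorial := by
        rw [Nat.factorial_succ]; push_cast; ring
      have hf2 : (m.factorial : ℝ) ≠ 0 := Nat.cast_ne_zero.2 (Nat.factorial_ne_zero _)
      have : (n + 1 - (m + 1)) = n - m := by omega
      rw [this, hfs]
      have hm1 : ((m : ℝ) + 1) ≠ 0 := by positivity
      field_simp
      push_cast
      ring
    have hCc : ((2 : ℝ) * (n + 1) + 1) * Cc (n + 1) = 2 * Cc n := by
      simp only [Cc]
      have h1 : (2 * (n + 1) + 1).factorial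
          = (2 * (n + 1) + 1) * ((2 * n + 2) * (2 * n + 1).factorial) := by
        have : 2 * (n + 1) + 1 = (2 * n + 2) + 1 := by ring
        rw [this, Nat.factorial_succ, Nat.factorial_succ]
      rw [h1]
      have hf : ((2 * n + 1).factorial : ℝ) ≠ 0 := Nat.cast_ne_zero.2 (Nat.factorial_ne_zero _)
      have hnf : ((n + 1).factorial : ℝ) = (n + 1) * n.factorial := by
        rw [Nat.factorial_succ]; push_cast; ring
      rw [hnf]
      push_cast
      have h2 : (2 : ℝ) * ((n : ℝ) + 1) + 1 ≠ 0 := by positivity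
      have h3 : (2 : ℝ) * (n : ℝ) + 2 ≠ 0 := by positivity
      field_simp
      ring
    have hne : ((2 : ℝ) * (n + 1) + 1) ≠ 0 := by positivity
    have := key.trans hCc.symm
    exact mul_left_cancel₀ hne this

lemma conv_inv (u : ℕ → ℝ) (n : ℕ) :
    ∑ m ∈ range (n + 1), (1 : ℝ) ^ m / m.factorial *
      ∑ j ∈ range (n - m + 1), (-1 : ℝ) ^ j / j.factorial * u (n - m - j) = u n := by
  classical
  set P : PowerSeries ℝ := PowerSeries.mk fun m => (1 : ℝ) ^ m / m.factorial with hP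
  set N : PowerSeries ℝ := PowerSeries.mk fun j => (-1 : ℝ) ^ j / j.factorial with hN
  set U : PowerSeries ℝ := PowerSeries.mk u with hU
  have hPN : P * N = 1 := by
    ext k
    rw [PowerSeries.coeff_mul, Finset.Nat.sum_antidiagonal_eq_sum_range_succ_mk]
    simp only [hP, hN, PowerSeries.coeff_mk, PowerSeries.coeff_one]
    rcases Nat.eq_zero_or_pos k with hk | hk
    · subst hk; simp
    · rw [if_neg hk.ne']
      have := alt_sum k hk.ne'
      rw [← this]
      refine sum_congr rfl fun m hm => ?_
      rw [one_pow, div_mul_div_comm, one_mul, mul_comm ((m.factorial : ℝ)) _]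
  have key : PowerSeries.coeff n (P * (N * U)) = u n := by
    rw [← mul_assoc, hPN, one_mul, hU, PowerSeries.coeff_mk]
  rw [← key, PowerSeries.coeff_mul, Finset.Nat.sum_antidiagonal_eq_sum_range_succ_mk]
  refine sum_congr rfl fun m hm => ?_
  rw [PowerSeries.coeff_mul, Finset.Nat.sum_antidiagonal_eq_sum_range_succ_mk]
  simp only [hP, hN, hU, PowerSeries.coeff_mk, mul_sum]

lemma conv_Dc (n : ℕ) :
    ∑ m ∈ range (n + 1), (1 : ℝ) ^ m / m.factorial * Dc (n - m) = Bc n := by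
  have := conv_inv Bc n
  rw [← this]
  exact sum_congr rfl fun m hm => by rw [Dc]

lemma Q_rec (n : ℕ) :
    ((2 : ℝ) * (n + 1) + 3) * Qc (n + 1) = Bc (n + 1) + 2 * Qc n := by
  rw [Qc, mul_sum]
  have hsplit : ∀ m ∈ range (n + 2),
      ((2 : ℝ) * (n + 1) + 3) * ((1 : ℝ) ^ m / m.factorial * Ec (n + 1 - m))
      = (1 : ℝ) ^ m / m.factorial * Dc (n + 1 - m)
        + 2 * (m * ((1 : ℝ) ^ m / m.factorial * Ec (n + 1 - m))) := by
    intro m hm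
    have hmn : m ≤ n + 1 := Nat.lt_succ_iff.mp (mem_range.mp hm)
    have hcast : ((n + 1 - m : ℕ) : ℝ) = (n : ℝ) + 1 - m := by
      push_cast [Nat.cast_sub hmn]; ring
    have h1 : ((2 : ℝ) * (n + 1) + 3) = (2 * ((n + 1 - m : ℕ) : ℝ) + 3) + 2 * m := by
      rw [hcast]; ring
    rw [h1]
    have hD : (2 * ((n + 1 - m : ℕ) : ℝ) + 3) * Ec (n + 1 - m) = Dc (n + 1 - m) := by
      have hpos : (2 : ℝ) * ((n + 1 - m : ℕ) : ℝ) + 3 ≠ 0 := by positivity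
      rw [Ec, mul_comm, div_mul_cancel₀ _ hpos]
    calc ((2 * ((n + 1 - m : ℕ) : ℝ) + 3) + 2 * m) * ((1 : ℝ) ^ m / m.factorial * Ec (n + 1 - m))
        = (1 : ℝ) ^ m / m.factorial * ((2 * ((n + 1 - m : ℕ) : ℝ) + 3) * Ec (n + 1 - m))
          + 2 * (m * ((1 : ℝ) ^ m / m.factorial * Ec (n + 1 - m))) := by ring
      _ = _ := by rw [hD]
  rw [sum_congr rfl hsplit, sum_add_distrib, conv_Dc (n + 1)]
  congr 1
  rw [← mul_sum]
  congr 1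
  rw [Finset.sum_range_succ']
  simp only [Nat.cast_zero, zero_mul, add_zero]
  rw [Qc]
  refine sum_congr rfl fun m hm => ?_
  have hfs : ((m + 1).factorial : ℝ) = (m + 1) * m.factorial := by
    rw [Nat.factorial_succ]; push_cast; ring
  have hf2 : (m.factorial : ℝ) ≠ 0 := Nat.cast_ne_zero.2 (Nat.factorial_ne_zero _)
  have hnm : (n + 1 - (m + 1)) = n - m := by omega
  rw [hnm, hfs]
  have hm1 : ((m : ℝ) + 1) ≠ 0 := by positivity
  field_simp
  push_cast
  ring

lemma Qc_zero : Qc 0 = 1 / 6 := by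
  simp [Qc, Ec, Dc, Bc, Cc]
  norm_num

lemma fact_dfact (n : ℕ) :
    ((2 * n + 4).factorial : ℕ) = 2 ^ (n + 2) * (n + 2).factorial * (2 * n + 3).doubleFactorial := by
  have h1 : 2 * n + 4 = (2 * n + 3) + 1 := by omega
  rw [h1, Nat.factorial_eq_mul_doubleFactorial]
  have h2 : (2 * n + 3) + 1 = 2 * (n + 2) := by omega
  rw [h2, Nat.doubleFactorial_two_mul]

lemma hB (n : ℕ) : Bc (n + 1)
    = 2 ^ n / (((n : ℝ) + 2) * ((2 * n + 3).doubleFactorial : ℝ)) := by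
  have hnat : (2 * (n + 1) + 1).factorial * (2 * n + 4) = (2 * n + 4).factorial := by
    have h := Nat.factorial_succ (2 * n + 3)
    have e2 : 2 * n + 3 + 1 = 2 * n + 4 := by omega
    rw [e2] at h
    have e1 : 2 * (n + 1) + 1 = 2 * n + 3 := by omega
    rw [e1, h]
    ring
  have hfs : ((n + 2).factorial : ℝ) = ((n : ℝ) + 2) * ((n + 1).factorial : ℝ) := by
    rw [show n + 2 = (n + 1) + 1 from rfl, Nat.factorial_succ]
    push_cast; ring
  have hf : ((2 * (n + 1) + 1).factorial : ℝ) * (2 * (n : ℝ) + 4)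
      = 2 ^ (n + 2) * ((n + 2).factorial : ℝ) * ((2 * n + 3).doubleFactorial : ℝ) := by
    have := congrArg (fun m : ℕ => (m : ℝ)) (hnat.trans (fact_dfact n))
    push_cast at this
    linear_combination this
  have hD : (0:ℝ) < ((2 * n + 3).doubleFactorial : ℝ) :=
    Nat.cast_pos.2 (Nat.doubleFactorial_pos _)
  have hF : ((2 * (n + 1) + 1).factorial : ℝ)
      = 2 ^ (n + 1) * ((n + 1).factorial : ℝ) * ((2 * n + 3).doubleFactorial : ℝ) := by
    apply mul_right_cancel₀ (b := 2 * ((n : ℝ) + 2)) (by positivity)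
    linear_combination hf + (2:ℝ) ^ (n + 2) * ((2 * n + 3).doubleFactorial : ℝ) * hfs
  rw [Bc, Cc, div_div, hF, div_eq_div_iff (by positivity) (by positivity)]
  push_cast
  rw [show (4:ℝ) = 2 * 2 by norm_num, mul_pow]
  ring

lemma idC (n : ℕ) : Qc n
    = 2 ^ n * (∑ k ∈ Finset.range (n + 1), (1:ℝ) / ((k:ℝ) + 1))
      / (2 * ((2 * n + 3).doubleFactorial : ℝ)) := by
  induction n with
  | zero =>
    rw [Qc_zero]
    norm_num [Nat.doubleFactorial]
  | succ n ih =>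
    have hD : (0:ℝ) < ((2 * n + 3).doubleFactorial : ℝ) :=
      Nat.cast_pos.2 (Nat.doubleFactorial_pos _)
    have hD5 : ((2 * (n + 1) + 3).doubleFactorial : ℝ)
        = (2 * (n:ℝ) + 5) * ((2 * n + 3).doubleFactorial : ℝ) := by
      have e : 2 * (n + 1) + 3 = (2 * n + 3) + 2 := by omega
      rw [e, Nat.doubleFactorial_add_two]
      push_cast; ring
    have h5 : (2:ℝ) * ((n:ℝ) + 1) + 3 ≠ 0 := by positivity
    have hrec := Q_rec n
    rw [hB n, ih] at hrec
    have hQ1 : Qc (n + 1)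
        = (2 ^ n / (((n:ℝ) + 2) * ((2 * n + 3).doubleFactorial : ℝ))
            + 2 * (2 ^ n * (∑ k ∈ Finset.range (n + 1), (1:ℝ) / ((k:ℝ) + 1))
              / (2 * ((2 * n + 3).doubleFactorial : ℝ))))
          / (2 * ((n:ℝ) + 1) + 3) := by
      rw [eq_div_iff h5]
      linear_combination hrec
    rw [hQ1, hD5]
    rw [show (∑ k ∈ Finset.range (n + 1 + 1), (1:ℝ) / ((k:ℝ) + 1))
        = (∑ k ∈ Finset.range (n + 1), (1:ℝ) / ((k:ℝ) + 1)) + 1 / ((n:ℝ) + 2) by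
      rw [Finset.sum_range_succ]; push_cast; ring]
    push_cast
    set a : ℝ := (n : ℝ) with ha
    set D : ℝ := ((2 * n + 3).doubleFactorial : ℝ) with hDdef
    set H : ℝ := ∑ k ∈ Finset.range (n + 1), (1:ℝ) / ((k:ℝ) + 1) with hH
    have ha0 : (0:ℝ) ≤ a := by rw [ha]; positivity
    have hn2 : a + 2 ≠ 0 := by positivity
    have hD' : D ≠ 0 := ne_of_gt hD
    have h5' : 2 * (a + 1) + 3 ≠ 0 := by positivity
    field_simp
    ring

lemma bound_Ac (n : ℕ) : |Ac n| ≤ (1:ℝ) ^ n / n.factorial := by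
  rw [Ac, abs_div, abs_pow, abs_neg, abs_one, one_pow]
  rw [div_le_div_iff₀ (by positivity) (by positivity)]
  have h1 : |(n.factorial : ℝ) * (2 * n + 1)| = (n.factorial : ℝ) * (2 * n + 1) :=
    abs_of_nonneg (by positivity)
  rw [h1]
  nlinarith [(Nat.cast_pos (α := ℝ)).2 n.factorial_pos, Nat.cast_nonneg (α := ℝ) n]

lemma bound_Cc (n : ℕ) : |Cc n| ≤ (4:ℝ) ^ n / n.factorial := by
  have h0 : (0:ℝ) ≤ Cc n := by rw [Cc]; positivity
  rw [abs_of_nonneg h0, Cc, div_le_div_iff₀ (by positivity) (by positivity)]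
  have h1 : (n.factorial * n.factorial : ℕ) ≤ (2 * n + 1).factorial := by
    have hd : n.factorial * n.factorial ≤ (n + n).factorial :=
      Nat.le_of_dvd (Nat.factorial_pos _) (Nat.factorial_mul_factorial_dvd_factorial_add n n)
    exact hd.trans (Nat.factorial_le (by omega))
  have h2 : ((n.factorial : ℝ)) * n.factorial ≤ ((2 * n + 1).factorial : ℝ) := by
    exact_mod_cast h1
  nlinarith [pow_nonneg (by norm_num : (0:ℝ) ≤ 4) n]

lemma bound_Bc (n : ℕ) : |Bc n| ≤ (4:ℝ) ^ n / n.factorial := by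
  rw [Bc, abs_div]
  refine le_trans (le_trans (div_le_self (abs_nonneg _) ?_) (bound_Cc n)) le_rfl
  rw [abs_of_nonneg (by positivity : (0:ℝ) ≤ 2 * (n:ℝ) + 2)]
  linarith [Nat.cast_nonneg (α := ℝ) n]

lemma bound_Dc (n : ℕ) : |Dc n| ≤ (8:ℝ) ^ n / n.factorial := by
  have := conv_bound Bc 4 (by norm_num) bound_Bc (-1) (by norm_num) n
  rw [Dc]
  convert this using 2
  norm_num

lemma bound_Ec (n : ℕ) : |Ec n| ≤ (8:ℝ) ^ n / n.factorial := by
  rw [Ec, abs_div]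
  refine le_trans (div_le_self (abs_nonneg _) ?_) (bound_Dc n)
  rw [abs_of_nonneg (by positivity : (0:ℝ) ≤ 2 * (n:ℝ) + 3)]
  linarith [Nat.cast_nonneg (α := ℝ) n]

lemma bound_Qc (n : ℕ) : |Qc n| ≤ (16:ℝ) ^ n / n.factorial := by
  have := conv_bound Ec 8 (by norm_num) bound_Ec 1 (by norm_num) n
  rw [Qc]
  convert this using 2
  norm_num

lemma summable_of_bound (c : ℕ → ℝ) (K : ℝ) (hc : ∀ n, |c n| ≤ K ^ n / n.factorial)
    (R : ℝ) (hR : 0 ≤ R) (r : ℕ) : Summable (fun n => |c n| * R ^ (2 * n + r)) := by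
  refine Summable.of_nonneg_of_le (fun n => by positivity) (fun n => ?_) (summable_aux K R r)
  exact mul_le_mul_of_nonneg_right (hc n) (by positivity)

noncomputable def f1 (t : ℝ) : ℝ := ∫ u in (0:ℝ)..t, Real.exp (-u ^ 2)

noncomputable def g1 (x : ℝ) : ℝ := ∫ t in (0:ℝ)..x, Real.exp (t ^ 2) * f1 t

noncomputable def h1 (x : ℝ) : ℝ := ∫ u in (0:ℝ)..x, Real.exp (-u ^ 2) * g1 u

lemma psi2_eq (x : ℝ) : psi2 x = 4 * ∫ t in (0:ℝ)..x, Real.exp (t ^ 2) * h1 t := rfl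

lemma S1 (t : ℝ) : HasSum (fun m : ℕ => Ac m * t ^ (2 * m + 1)) (f1 t) := by
  have h := hasSum_primitive (fun m => (-1) ^ m / m.factorial) (fun m => 2 * m)
      (fun u => Real.exp (-u ^ 2))
      (fun u => by
        have := hasSum_exp_sq (-1) u
        rw [neg_one_mul] at this
        exact this)
      (fun R hR => by
        refine (summable_aux 1 R 0).congr fun m => ?_
        simp [abs_div, abs_pow]) t
  refine h.congr_fun fun m => ?_
  rw [Ac]
  have h1 : (m.factorial : ℝ) ≠ 0 := Nat.cast_ne_zero.2 (Nat.factorial_ne_zero _)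
  have h2 : (2 * (m:ℝ) + 1) ≠ 0 := by positivity
  push_cast
  field_simp
  try ring
  try exact Or.inl trivial

lemma S2 (t : ℝ) : HasSum (fun n : ℕ => Cc n * t ^ (2 * n + 1)) (Real.exp (t ^ 2) * f1 t) := by
  have h := hasSum_exp_mul 1 (by norm_num) Ac 1 t (f1 t) (S1 t)
      (summable_of_bound Ac 1 bound_Ac |t| (abs_nonneg t) 1)
  rw [one_mul] at h
  exact h.congr_fun fun n => by rw [idA n]

lemma S3 (x : ℝ) : HasSum (fun n : ℕ => Bc n * x ^ (2 * n + 2)) (g1 x) := by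
  have h := hasSum_primitive Cc (fun n => 2 * n + 1) (fun t => Real.exp (t ^ 2) * f1 t)
      S2 (fun R hR => summable_of_bound Cc 4 bound_Cc R hR 1) x
  refine h.congr_fun fun n => ?_
  have e : 2 * n + 1 + 1 = 2 * n + 2 := by omega
  rw [e, Bc]
  have h2 : (2 * (n:ℝ) + 2) ≠ 0 := by positivity
  push_cast
  field_simp
  try ring
  try exact Or.inl trivial

lemma S4 (t : ℝ) : HasSum (fun n : ℕ => Dc n * t ^ (2 * n + 2)) (Real.exp (-t ^ 2) * g1 t) := by
  have h := hasSum_exp_mul (-1) (by norm_num) Bc 2 t (g1 t) (S3 t)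
      (summable_of_bound Bc 4 bound_Bc |t| (abs_nonneg t) 2)
  rw [neg_one_mul] at h
  exact h.congr_fun fun n => by rw [Dc]

lemma S5 (x : ℝ) : HasSum (fun n : ℕ => Ec n * x ^ (2 * n + 3)) (h1 x) := by
  have h := hasSum_primitive Dc (fun n => 2 * n + 2) (fun t => Real.exp (-t ^ 2) * g1 t)
      S4 (fun R hR => summable_of_bound Dc 8 bound_Dc R hR 2) x
  refine h.congr_fun fun n => ?_
  have e : 2 * n + 2 + 1 = 2 * n + 3 := by omega
  rw [e, Ec]
  have h2 : (2 * (n:ℝ) + 3) ≠ 0 := by positivity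
  push_cast
  field_simp
  try ring
  try exact Or.inl trivial

lemma S6 (t : ℝ) : HasSum (fun n : ℕ => Qc n * t ^ (2 * n + 3)) (Real.exp (t ^ 2) * h1 t) := by
  have h := hasSum_exp_mul 1 (by norm_num) Ec 3 t (h1 t) (S5 t)
      (summable_of_bound Ec 8 bound_Ec |t| (abs_nonneg t) 3)
  rw [one_mul] at h
  exact h.congr_fun fun n => by rw [Qc]

lemma S7 (x : ℝ) :
    HasSum (fun n : ℕ => 4 * (Qc n * x ^ (2 * n + 4) / (2 * (n:ℝ) + 4))) (psi2 x) := by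
  have h := hasSum_primitive Qc (fun n => 2 * n + 3) (fun t => Real.exp (t ^ 2) * h1 t)
      S6 (fun R hR => summable_of_bound Qc 16 bound_Qc R hR 3) x
  rw [psi2_eq]
  refine (h.mul_left 4).congr_fun fun n => ?_
  have e : 2 * n + 3 + 1 = 2 * n + 4 := by omega
  rw [e]
  have h2 : (2 * (n:ℝ) + 4) ≠ 0 := by positivity
  push_cast
  field_simp
  try ring
  try exact Or.inl trivial

theorem psi2_even_and_series (x : ℝ) :
    psi2 (-x) = psi2 x ∧
    HasSum (fun n : ℕ =>
        (2 : ℝ) ^ n * x ^ (2 * n + 4) / ((Nat.doubleFactorial (2 * n + 3) : ℝ) * (n + 2))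
          * ∑ k ∈ Finset.range (n + 1), (1 : ℝ) / (k + 1))
      (psi2 x) := by
  have main : ∀ y : ℝ, HasSum (fun n : ℕ =>
      (2 : ℝ) ^ n * y ^ (2 * n + 4) / ((Nat.doubleFactorial (2 * n + 3) : ℝ) * (n + 2))
        * ∑ k ∈ Finset.range (n + 1), (1 : ℝ) / (k + 1)) (psi2 y) := by
    intro y
    refine (S7 y).congr_fun fun n => ?_
    rw [idC n]
    have hD : (0:ℝ) < ((2 * n + 3).doubleFactorial : ℝ) :=
      Nat.cast_pos.2 (Nat.doubleFactorial_pos _)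
    have hD' : ((2 * n + 3).doubleFactorial : ℝ) ≠ 0 := ne_of_gt hD
    have h2 : ((n:ℝ) + 2) ≠ 0 := by positivity
    have h4 : (2 * (n:ℝ) + 4) ≠ 0 := by positivity
    field_simp
    ring
  refine ⟨?_, main x⟩
  refine HasSum.unique ?_ (main x)
  exact (main (-x)).congr_fun fun n => by
    rw [(show Even (2 * n + 4) from ⟨n + 2, by ring⟩).neg_pow]
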